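/- Suppose each value function v i is concave and increasing on [0, b i]. Then ρ is convex: for all bounded functions X, Y : Ω → ℝ and every λ ∈ [0, 1], ρ(λ X + (1 - λ) Y) ≤ λ ρ(X) + (1 - λ) ρ(Y) (with the usual conventions for +∞). -/
import Mathlib


open MeasureTheory

noncomputable section

/-- The set of possible price scenarios. -/
abbrev Omega (N : ℕ) (pmax : ℝ) : Type :=
  {p : Fin N → ℝ // ∀ i, 0 ≤ p i ∧ p i ≤ pmax}

/-- A position `S = (w, s)`: collected revenue `w ≥ 0` and remaining budgets `0 ≤ s i ≤ b i`. -/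
def IsPosition (N : ℕ) (b : Fin N → ℝ) (S : ℝ × (Fin N → ℝ)) : Prop :=
  0 ≤ S.1 ∧ ∀ i, 0 ≤ S.2 i ∧ S.2 i ≤ b i

/-- Return function of a position: `X_S(p) = w + ∑ i, p i * s i`. -/
def ret (N : ℕ) (pmax : ℝ) (S : ℝ × (Fin N → ℝ)) (p : Omega N pmax) : ℝ :=
  S.1 + ∑ i, p.1 i * S.2 i

/-- Generating function `θ(S) = -w - ∑ i, v i (s i)`. -/
def theta (N : ℕ) (v : Fin N → ℝ → ℝ) (S : ℝ × (Fin N → ℝ)) : ℝ :=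
  -S.1 - ∑ i, v i (S.2 i)

/-- Risk measure `ρ(X) = inf { θ(S) : S a position with X_S ≤ X pointwise }`, valued
in `ℝ ∪ {+∞}` (the infimum of the empty set is `+∞`). -/
def rho (N : ℕ) (b : Fin N → ℝ) (pmax : ℝ) (v : Fin N → ℝ → ℝ)
    (X : Omega N pmax → ℝ) : EReal :=
  sInf {t : EReal | ∃ S : ℝ × (Fin N → ℝ), IsPosition N b S ∧
    (∀ p, ret N pmax S p ≤ X p) ∧ t = ((theta N v S : ℝ) : EReal)}

/-- A bounded function on `Ω`. -/
def Bounded (N : ℕ) (pmax : ℝ) (X : Omega N pmax → ℝ) : Prop :=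
  ∃ C, ∀ p, |X p| ≤ C

/-- The real-valued set of generating values of admissible positions. -/
def posSet (N : ℕ) (b : Fin N → ℝ) (pmax : ℝ) (v : Fin N → ℝ → ℝ)
    (X : Omega N pmax → ℝ) : Set ℝ :=
  {t : ℝ | ∃ S, IsPosition N b S ∧ (∀ p, ret N pmax S p ≤ X p) ∧ t = theta N v S}

lemma rho_eq_image (N : ℕ) (b : Fin N → ℝ) (pmax : ℝ) (v : Fin N → ℝ → ℝ)
    (X : Omega N pmax → ℝ) :
    rho N b pmax v X = sInf ((fun t : ℝ => (t : EReal)) '' posSet N b pmax v X) := by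
  unfold rho
  congr 1
  ext t
  constructor
  · rintro ⟨S, h1, h2, rfl⟩; exact ⟨theta N v S, ⟨S, h1, h2, rfl⟩, rfl⟩
  · rintro ⟨r, ⟨S, h1, h2, rfl⟩, rfl⟩; exact ⟨S, h1, h2, rfl⟩

lemma bdd_aux (N : ℕ) (b : Fin N → ℝ) (hb : ∀ i, 0 < b i) (pmax : ℝ) (hpmax : 0 < pmax)
    (v : Fin N → ℝ → ℝ) (hmono : ∀ i, MonotoneOn (v i) (Set.Icc (0:ℝ) (b i)))
    (X : Omega N pmax → ℝ) (hX : Bounded N pmax X) :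
    BddBelow (posSet N b pmax v X) := by
  obtain ⟨C, hC⟩ := hX
  refine ⟨-C - ∑ i, v i (b i), ?_⟩
  rintro t ⟨S, hS, hle, rfl⟩
  set p0 : Omega N pmax := ⟨fun _ => 0, fun i => ⟨le_refl _, hpmax.le⟩⟩ with hp0
  have hw : S.1 ≤ C := by
    have h1 := hle p0
    simp only [ret, hp0, zero_mul, Finset.sum_const_zero, add_zero] at h1
    have h2 := (abs_le.1 (hC p0)).2
    linarith
  have hsum : ∑ i, v i (S.2 i) ≤ ∑ i, v i (b i) :=
    Finset.sum_le_sum fun i _ =>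
      (hmono i) ⟨(hS.2 i).1, (hS.2 i).2⟩ ⟨(hb i).le, le_refl _⟩ (hS.2 i).2
  unfold theta
  linarith

lemma comb_aux (N : ℕ) (b : Fin N → ℝ) (pmax : ℝ) (v : Fin N → ℝ → ℝ)
    (hconc : ∀ i, ConcaveOn ℝ (Set.Icc (0:ℝ) (b i)) (v i))
    (X Y : Omega N pmax → ℝ) (l : ℝ) (hl0 : 0 ≤ l) (hl1 : l ≤ 1)
    {t1 t2 : ℝ} (h1 : t1 ∈ posSet N b pmax v X) (h2 : t2 ∈ posSet N b pmax v Y) :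
    ∃ t ∈ posSet N b pmax v (fun p => l * X p + (1 - l) * Y p),
      t ≤ l * t1 + (1 - l) * t2 := by
  obtain ⟨S1, hS1, hle1, rfl⟩ := h1
  obtain ⟨S2, hS2, hle2, rfl⟩ := h2
  have hm0 : (0:ℝ) ≤ 1 - l := by linarith
  set S : ℝ × (Fin N → ℝ) :=
    (l * S1.1 + (1 - l) * S2.1, fun i => l * S1.2 i + (1 - l) * S2.2 i) with hSdef
  have hmemIcc : ∀ i, S.2 i ∈ Set.Icc (0:ℝ) (b i) := by
    intro i
    obtain ⟨ha1, ha2⟩ := hS1.2 i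
    obtain ⟨hb1, hb2⟩ := hS2.2 i
    constructor
    · exact add_nonneg (mul_nonneg hl0 ha1) (mul_nonneg hm0 hb1)
    · show l * S1.2 i + (1 - l) * S2.2 i ≤ b i
      nlinarith
  have hpos : IsPosition N b S := by
    refine ⟨add_nonneg (mul_nonneg hl0 hS1.1) (mul_nonneg hm0 hS2.1), fun i => hmemIcc i⟩
  have hret : ∀ p, ret N pmax S p ≤ l * X p + (1 - l) * Y p := by
    intro p
    have hsum : ∑ i, p.1 i * (l * S1.2 i + (1 - l) * S2.2 i) =
        l * ∑ i, p.1 i * S1.2 i + (1 - l) * ∑ i, p.1 i * S2.2 i := by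
      rw [Finset.mul_sum, Finset.mul_sum, ← Finset.sum_add_distrib]
      exact Finset.sum_congr rfl fun i _ => by ring
    have heq : ret N pmax S p = l * ret N pmax S1 p + (1 - l) * ret N pmax S2 p := by
      simp only [ret, hSdef, hsum]; ring
    rw [heq]
    have h1 := mul_le_mul_of_nonneg_left (hle1 p) hl0
    have h2 := mul_le_mul_of_nonneg_left (hle2 p) hm0
    linarith
  refine ⟨theta N v S, ⟨S, hpos, hret, rfl⟩, ?_⟩
  have hv : ∀ i, l * v i (S1.2 i) + (1 - l) * v i (S2.2 i) ≤ v i (S.2 i) := by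
    intro i
    have := (hconc i).2 ⟨(hS1.2 i).1, (hS1.2 i).2⟩ ⟨(hS2.2 i).1, (hS2.2 i).2⟩
      hl0 hm0 (by ring)
    simpa [smul_eq_mul] using this
  have hsum : ∑ i, (l * v i (S1.2 i) + (1 - l) * v i (S2.2 i)) ≤ ∑ i, v i (S.2 i) :=
    Finset.sum_le_sum fun i _ => hv i
  have hexp : ∑ i, (l * v i (S1.2 i) + (1 - l) * v i (S2.2 i)) =
      l * ∑ i, v i (S1.2 i) + (1 - l) * ∑ i, v i (S2.2 i) := by
    rw [Finset.sum_add_distrib, ← Finset.mul_sum, ← Finset.mul_sum]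
  unfold theta
  simp only [hSdef]
  nlinarith [hsum, hexp]

theorem stmt4 (N : ℕ) (hN : 1 ≤ N) (b : Fin N → ℝ) (hb : ∀ i, 0 < b i)
    (pmax : ℝ) (hpmax : 0 < pmax) (v : Fin N → ℝ → ℝ)
    (hconc : ∀ i, ConcaveOn ℝ (Set.Icc (0:ℝ) (b i)) (v i))
    (hmono : ∀ i, MonotoneOn (v i) (Set.Icc (0:ℝ) (b i)))
    (X Y : Omega N pmax → ℝ)
    (hX : Bounded N pmax X) (hY : Bounded N pmax Y)
    (l : ℝ) (hl : l ∈ Set.Icc (0:ℝ) 1) :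
    rho N b pmax v (fun p => l * X p + (1 - l) * Y p) ≤
      ((l : ℝ) : EReal) * rho N b pmax v X +
        ((1 - l : ℝ) : EReal) * rho N b pmax v Y := by
  obtain ⟨hl0, hl1⟩ := hl
  rcases eq_or_lt_of_le hl0 with h0 | h0
  · simp only [← h0, zero_mul, zero_add, sub_zero, one_mul, EReal.coe_zero, EReal.coe_one]
    exact le_refl _
  rcases eq_or_lt_of_le hl1 with h1 | h1
  · simp only [h1, one_mul, sub_self, zero_mul, add_zero, EReal.coe_one, EReal.coe_zero]
    exact le_refl _
  -- 0 < l < 1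
  have hm0 : (0:ℝ) < 1 - l := by linarith
  have hZ : Bounded N pmax (fun p => l * X p + (1 - l) * Y p) := by
    obtain ⟨C1, hC1⟩ := hX
    obtain ⟨C2, hC2⟩ := hY
    refine ⟨l * C1 + (1 - l) * C2, fun p => ?_⟩
    calc |l * X p + (1 - l) * Y p| ≤ |l * X p| + |(1 - l) * Y p| := abs_add_le _ _
      _ = l * |X p| + (1 - l) * |Y p| := by
          rw [abs_mul, abs_mul, abs_of_pos h0, abs_of_pos hm0]
      _ ≤ l * C1 + (1 - l) * C2 := by
          have := hC1 p; have := hC2 p; nlinarith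
  have hAb := bdd_aux N b hb pmax hpmax v hmono X hX
  have hBb := bdd_aux N b hb pmax hpmax v hmono Y hY
  have hCb := bdd_aux N b hb pmax hpmax v hmono _ hZ
  rw [rho_eq_image, rho_eq_image, rho_eq_image]
  have himg : ∀ (s : Set ℝ), s.Nonempty → BddBelow s →
      sInf ((fun t : ℝ => (t : EReal)) '' s) = ((sInf s : ℝ) : EReal) := by
    intro s hs hbs
    exact (Monotone.map_csInf_of_continuousAt
      (continuous_coe_real_ereal.continuousAt)
      (fun _ _ h => EReal.coe_le_coe_iff.2 h) hs hbs).symm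
  have hlow : ∀ (s : Set ℝ), BddBelow s →
      (⊥ : EReal) < sInf ((fun t : ℝ => (t : EReal)) '' s) := by
    intro s hbs
    obtain ⟨r, hr⟩ := hbs
    have : ((r : ℝ) : EReal) ≤ sInf ((fun t : ℝ => (t : EReal)) '' s) := by
      apply le_sInf
      rintro x ⟨y, hy, rfl⟩
      exact EReal.coe_le_coe_iff.2 (hr hy)
    exact lt_of_lt_of_le (EReal.bot_lt_coe r) this
  by_cases hAne : (posSet N b pmax v X).Nonempty
  swap
  · rw [Set.not_nonempty_iff_eq_empty] at hAne
    rw [hAne, Set.image_empty, sInf_empty, EReal.coe_mul_top_of_pos h0,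
      EReal.top_add_of_ne_bot]
    · exact le_top
    · intro hbot
      have hne : ((1 - l : ℝ) : EReal) * sInf ((fun t : ℝ => (t : EReal)) ''
          posSet N b pmax v Y) ≥ ((1 - l : ℝ) : EReal) * ((Classical.choose hBb : ℝ) : EReal) := by
        apply mul_le_mul_of_nonneg_left _ (by exact_mod_cast hm0.le)
        apply le_sInf
        rintro x ⟨y, hy, rfl⟩
        exact EReal.coe_le_coe_iff.2 (Classical.choose_spec hBb hy)
      rw [hbot] at hne
      rw [← EReal.coe_mul] at hne
      exact (EReal.bot_lt_coe _).not_ge hne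
  by_cases hBne : (posSet N b pmax v Y).Nonempty
  swap
  · rw [Set.not_nonempty_iff_eq_empty] at hBne
    rw [hBne, Set.image_empty, sInf_empty, EReal.coe_mul_top_of_pos hm0, add_comm,
      EReal.top_add_of_ne_bot]
    · exact le_top
    · intro hbot
      have hne : ((l : ℝ) : EReal) * sInf ((fun t : ℝ => (t : EReal)) ''
          posSet N b pmax v X) ≥ ((l : ℝ) : EReal) * ((Classical.choose hAb : ℝ) : EReal) := by
        apply mul_le_mul_of_nonneg_left _ (by exact_mod_cast h0.le)
        apply le_sInf
        rintro x ⟨y, hy, rfl⟩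
        exact EReal.coe_le_coe_iff.2 (Classical.choose_spec hAb hy)
      rw [hbot] at hne
      rw [← EReal.coe_mul] at hne
      exact (EReal.bot_lt_coe _).not_ge hne
  -- both nonempty
  have hCne : (posSet N b pmax v (fun p => l * X p + (1 - l) * Y p)).Nonempty := by
    obtain ⟨t1, ht1⟩ := hAne
    obtain ⟨t2, ht2⟩ := hBne
    obtain ⟨t, ht, _⟩ := comb_aux N b pmax v hconc X Y l hl0 hl1 ht1 ht2
    exact ⟨t, ht⟩
  rw [himg _ hAne hAb, himg _ hBne hBb, himg _ hCne hCb,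
    ← EReal.coe_mul, ← EReal.coe_mul, ← EReal.coe_add, EReal.coe_le_coe_iff]
  -- real inequality
  have key : ∀ t1 ∈ posSet N b pmax v X, ∀ t2 ∈ posSet N b pmax v Y,
      sInf (posSet N b pmax v (fun p => l * X p + (1 - l) * Y p)) ≤
        l * t1 + (1 - l) * t2 := by
    intro t1 ht1 t2 ht2
    obtain ⟨t, ht, hle⟩ := comb_aux N b pmax v hconc X Y l hl0 hl1 ht1 ht2
    exact (csInf_le hCb ht).trans hle
  set c := sInf (posSet N b pmax v (fun p => l * X p + (1 - l) * Y p)) with hc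
  have step2 : ∀ t2 ∈ posSet N b pmax v Y,
      c ≤ l * sInf (posSet N b pmax v X) + (1 - l) * t2 := by
    intro t2 ht2
    have : (c - (1 - l) * t2) / l ≤ sInf (posSet N b pmax v X) := by
      apply le_csInf hAne
      intro t1 ht1
      rw [div_le_iff₀ h0]
      have := key t1 ht1 t2 ht2
      nlinarith
    rw [div_le_iff₀ h0] at this
    nlinarith
  have : (c - l * sInf (posSet N b pmax v X)) / (1 - l) ≤ sInf (posSet N b pmax v Y) := by
    apply le_csInf hBne
    intro t2 ht2
    rw [div_le_iff₀ hm0]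
    have := step2 t2 ht2
    nlinarith
  rw [div_le_iff₀ hm0] at this
  nlinarith
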